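/- Fix an integer n ≥ 1 and let T be the nilpotent Jordan operator on ℂⁿ defined on the standard basis e₀, e₁, …, e_{n−1} by T e_j = e_{j+1} for 0 ≤ j ≤ n−2 and T e_{n−1} = 0. Then a nonzero vector v ∈ ℂⁿ satisfies ⟪v, T^m v⟫ = 0 for all m ≥ 1 if and only if v = c e_j for some scalar c ∈ ℂ ∖ {0} and some index 0 ≤ j ≤ n−1; that is, the T-inner vectors are exactly the nonzero scalar multiples of the standard basis vectors. -/

import Mathlib

open scoped ComplexInnerProductSpace

/-- For the nilpotent Jordan operator `T` on `ℂⁿ` with `T e_j = e_{j+1}` (and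
`T e_{n-1} = 0`), a nonzero vector `v` is `T`-inner iff it is a nonzero scalar
multiple of a standard basis vector. -/
theorem stmt3 (n : ℕ) (hn : 1 ≤ n)
    (T : EuclideanSpace ℂ (Fin n) →ₗ[ℂ] EuclideanSpace ℂ (Fin n))
    (hT : ∀ (v : EuclideanSpace ℂ (Fin n)) (i : Fin n),
      T v i = if (i : ℕ) = 0 then 0
        else v ⟨(i : ℕ) - 1, Nat.lt_of_le_of_lt (Nat.sub_le _ _) i.isLt⟩)
    (v : EuclideanSpace ℂ (Fin n)) (hv : v ≠ 0) :
    (∀ m : ℕ, 1 ≤ m → ⟪v, (T ^ m) v⟫ = 0) ↔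
      ∃ (c : ℂ) (j : Fin n), c ≠ 0 ∧ v = c • EuclideanSpace.single j 1 := by
  classical
  have hpow : ∀ (m : ℕ) (w : EuclideanSpace ℂ (Fin n)) (i : Fin n),
      (T ^ m) w i = if (i : ℕ) < m then 0
        else w ⟨(i : ℕ) - m, Nat.lt_of_le_of_lt (Nat.sub_le _ _) i.isLt⟩ := by
    intro m
    induction m with
    | zero =>
      intro w i
      simp
    | succ m ih =>
      intro w i
      have hstep : (T ^ (m + 1)) w = T ((T ^ m) w) := by
        rw [pow_succ']
        rfl
      rw [hstep, hT, ih]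
      simp only [Fin.val_mk]
      split_ifs <;>
        first
          | rfl
          | omega
          | (apply congrArg; apply Fin.ext; simp; omega)
  have hinner : ∀ w : EuclideanSpace ℂ (Fin n),
      ⟪v, w⟫ = ∑ i : Fin n, (starRingEnd ℂ) (v i) * (w i) := by
    intro w
    simp [PiLp.inner_apply, RCLike.inner_apply]
    exact Finset.sum_congr rfl (fun _ _ => mul_comm _ _)
  constructor
  · intro h
    set s : Finset (Fin n) := Finset.univ.filter (fun i => v i ≠ 0) with hs
    have hsne : s.Nonempty := by
      by_contra hcon
      apply hv
      ext i
      show v i = 0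
      by_contra hvi
      exact hcon ⟨i, by simp [hs, hvi]⟩
    set p := s.max' hsne with hpdef
    set q := s.min' hsne with hqdef
    have hps : p ∈ s := s.max'_mem hsne
    have hqs : q ∈ s := s.min'_mem hsne
    have hvp : v p ≠ 0 := by simpa [hs] using hps
    have hvq : v q ≠ 0 := by simpa [hs] using hqs
    have hqp : (q : ℕ) ≤ (p : ℕ) := s.min'_le p hps
    have hpq : (p : ℕ) = (q : ℕ) := by
      by_contra hne
      have hm : 1 ≤ (p : ℕ) - (q : ℕ) := by omega
      have h0 := h ((p : ℕ) - (q : ℕ)) hm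
      rw [hinner] at h0
      have hsum : ∑ i : Fin n, (starRingEnd ℂ) (v i) * ((T ^ ((p:ℕ) - (q:ℕ))) v i)
          = (starRingEnd ℂ) (v p) * v q := by
        rw [Finset.sum_eq_single p]
        · rw [hpow]
          have hnl : ¬ ((p : ℕ) < (p : ℕ) - (q : ℕ)) := by omega
          rw [if_neg hnl]
          congr 1
          apply congrArg
          apply Fin.ext
          simp
          omega
        · intro i _ hip
          rw [hpow]
          by_cases hvi : v i = 0
          · simp [hvi]
          · have his : i ∈ s := by simp [hs, hvi]
            have hip' : (i : ℕ) ≤ (p : ℕ) := s.le_max' i his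
            have hqi : (q : ℕ) ≤ (i : ℕ) := s.min'_le i his
            split_ifs with hlt
            · rw [mul_zero]
            · have hz : v ⟨(i : ℕ) - ((p:ℕ) - (q:ℕ)),
                  Nat.lt_of_le_of_lt (Nat.sub_le _ _) i.isLt⟩ = 0 := by
                by_contra hvz
                have hmem : (⟨(i : ℕ) - ((p:ℕ) - (q:ℕ)),
                    Nat.lt_of_le_of_lt (Nat.sub_le _ _) i.isLt⟩ : Fin n) ∈ s := by
                  simp [hs, hvz]
                have hq' := s.min'_le _ hmem
                have hq'' : (q : ℕ) ≤ (i : ℕ) - ((p:ℕ) - (q:ℕ)) := hq'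
                exact hip (Fin.ext (by omega))
              rw [hz, mul_zero]
        · intro hp'
          exact absurd (Finset.mem_univ p) hp'
      rw [hsum] at h0
      rcases mul_eq_zero.mp h0 with h1 | h1
      · exact hvp (by simpa using congrArg (starRingEnd ℂ) h1)
      · exact hvq h1
    refine ⟨v p, p, hvp, ?_⟩
    ext i
    by_cases hip : i = p
    · subst hip
      simp [EuclideanSpace.single_apply]
    · have hvi : v i = 0 := by
        by_contra hvi
        have his : i ∈ s := by simp [hs, hvi]
        have hip' : (i : ℕ) ≤ (p : ℕ) := s.le_max' i his
        have hqi : (q : ℕ) ≤ (i : ℕ) := s.min'_le i his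
        exact hip (Fin.ext (by omega))
      simp [EuclideanSpace.single_apply, hip, hvi]
  · rintro ⟨c, j, hc, rfl⟩
    intro m hm
    rw [hinner]
    apply Finset.sum_eq_zero
    intro i _
    rw [hpow]
    by_cases hij : i = j
    · subst hij
      split_ifs with hlt
      · rw [mul_zero]
      · have hne : (⟨(i : ℕ) - m, Nat.lt_of_le_of_lt (Nat.sub_le _ _) i.isLt⟩ : Fin n) ≠ i := by
          intro he
          have := congrArg Fin.val he
          simp at this
          omega
        have : (c • EuclideanSpace.single i 1 : EuclideanSpace ℂ (Fin n))
            ⟨(i : ℕ) - m, Nat.lt_of_le_of_lt (Nat.sub_le _ _) i.isLt⟩ = 0 := by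
          simp [EuclideanSpace.single_apply, hne]
        rw [this, mul_zero]
    · have : (c • EuclideanSpace.single j 1 : EuclideanSpace ℂ (Fin n)) i = 0 := by
        simp [EuclideanSpace.single_apply, hij]
      rw [this]
      simp
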